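/- arXiv:0901.1653 — 3 statements merged into one kernel-verified Lean document; each statement's English description precedes it below -/
import Mathlib

section
/- (Grauert–Hironaka formal division theorem.) Let A be a commutative unital integral domain and F_1,…,F_t nonzero elements of A[[X_1,…,X_n]]. Let β^i = ν(F_i) be the initial exponent of F_i and a_i = Init(F_i) the coefficient of the initial monomial of F_i. Let S be the multiplicatively closed subset of A generated by the a_i, i.e. S = {a_1^{m_1} ⋯ a_t^{m_t} : m_i ∈ ℕ}. Then every element F of A[[X]] (or of S^{-1}A[[X]]) can be written in a unique way as F = Σ_{1≤i≤t} D_i F_i + R with D_i, R ∈ S^{-1}A[[X]], Supp(R) ⊂ Δ̄ and Supp(D_i) + β^i ⊂ Δ_i, where Δ = ∪_{1≤i≤t}(β^i + ℕ^n), Δ̄ = ℕ^n − Δ and Δ_i = (β^i + ℕ^n) − ∪_{k<i}(β^k + ℕ^n). -/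
open scoped ENNReal

noncomputable section

/-- The total order on `ℕ^n` given by the lexicographic order on `(|α|, α₁, …, α_n)`. -/
def degLt {n : ℕ} (α β : Fin n →₀ ℕ) : Prop :=
  (∑ k, α k) < (∑ k, β k) ∨
    ((∑ k, α k) = (∑ k, β k) ∧ ∃ j : Fin n, (∀ k, k < j → α k = β k) ∧ α j < β j)

/-- `β` is the initial exponent `ν(f)` of `f`: the coefficient at `β` is nonzero and all
coefficients at smaller exponents vanish. -/
def hasInitExp {n : ℕ} {R : Type*} [Semiring R] (f : MvPowerSeries (Fin n) R)
    (β : Fin n →₀ ℕ) : Prop :=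
  MvPowerSeries.coeff β f ≠ 0 ∧ ∀ γ, degLt γ β → MvPowerSeries.coeff γ f = 0

/-- The support of a formal power series. -/
def psSupport {n : ℕ} {R : Type*} [Semiring R] (f : MvPowerSeries (Fin n) R) :
    Set (Fin n →₀ ℕ) :=
  {γ | MvPowerSeries.coeff γ f ≠ 0}

namespace DivAux

instance (n : ℕ) : WellFoundedLT (Fin n) := Finite.to_wellFoundedLT

variable {n : ℕ}

lemma degLt_iff_toLex {α β : Fin n →₀ ℕ} :
    degLt α β ↔
      toLex ((∑ k, α k), toLex (⇑α)) < toLex ((∑ k, β k), toLex (⇑β)) := by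
  rw [Prod.Lex.lt_iff]; exact Iff.rfl

lemma degLt_wf : WellFounded (degLt (n := n)) := by
  have h : Subrelation (degLt (n := n))
      (InvImage (· < ·) (fun α : Fin n →₀ ℕ => toLex ((∑ k, α k), toLex (⇑α)))) :=
    fun {a b} h => degLt_iff_toLex.1 h
  exact Subrelation.wf h (InvImage.wf _ (IsWellFounded.wf))

lemma degLt_total {α β : Fin n →₀ ℕ} (h : α ≠ β) : degLt α β ∨ degLt β α := by
  have h2 : toLex ((∑ k, α k), toLex (⇑α)) ≠ toLex ((∑ k, β k), toLex (⇑β)) := by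
    intro e
    exact h (DFunLike.coe_injective (congrArg (fun p => ofLex (ofLex p).2) e))
  rcases lt_or_gt_of_ne h2 with h' | h'
  · exact Or.inl (degLt_iff_toLex.2 h')
  · exact Or.inr (degLt_iff_toLex.2 h')

lemma degLt_add_right {α β : Fin n →₀ ℕ} (γ : Fin n →₀ ℕ) (h : degLt α β) :
    degLt (α + γ) (β + γ) := by
  unfold degLt at h ⊢
  simp only [Finsupp.add_apply, Finset.sum_add_distrib]
  rcases h with h | ⟨he, j, hj, hlt⟩
  · exact Or.inl (by omega)
  · exact Or.inr ⟨by omega, j, fun k hk => by rw [hj k hk], by omega⟩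

/-- `γ ∈ Δ_i`. -/
def inDelta {t : ℕ} (β : Fin t → (Fin n →₀ ℕ)) (i : Fin t) (γ : Fin n →₀ ℕ) : Prop :=
  β i ≤ γ ∧ ∀ k, k < i → ¬ β k ≤ γ

lemma le_iff_exists {α γ : Fin n →₀ ℕ} : α ≤ γ ↔ ∃ δ, γ = α + δ := le_iff_exists_add

section Constr

variable {A : Type*} [CommRing A] {t : ℕ}
  (F : Fin t → MvPowerSeries (Fin n) A)
  (β : Fin t → (Fin n →₀ ℕ)) (S : Submonoid A)
  (G : MvPowerSeries (Fin n) (Localization S))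
  (u : Fin t → (Localization S)ˣ)

/-- The images of the `F i` in the localization. -/
def Gm (i : Fin t) : MvPowerSeries (Fin n) (Localization S) :=
  MvPowerSeries.map (algebraMap A (Localization S)) (F i)

open Classical in
/-- one step of the coefficient recursion -/
def Eval (c : (Fin n →₀ ℕ) → Localization S) (γ : Fin n →₀ ℕ) : Localization S :=
  MvPowerSeries.coeff γ G - ∑ i, ∑ p ∈ Finset.HasAntidiagonal.antidiagonal γ,
    (if p.2 ≠ β i ∧ degLt (p.1 + β i) γ ∧ inDelta β i (p.1 + β i) then c (p.1 + β i) else 0)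
      * MvPowerSeries.coeff p.2 (Gm F S i)

open Classical in
/-- the smallest index `i` with `β i ≤ γ`. -/
def iMin (γ : Fin n →₀ ℕ) (h : ∃ i, β i ≤ γ) : Fin t :=
  (Finset.univ.filter fun i => β i ≤ γ).min'
    (by obtain ⟨i, hi⟩ := h; exact ⟨i, by simp [hi]⟩)

lemma iMin_le (γ : Fin n →₀ ℕ) (h : ∃ i, β i ≤ γ) : β (iMin β γ h) ≤ γ := by
  classical
  have := Finset.min'_mem (Finset.univ.filter fun i => β i ≤ γ)
    (by obtain ⟨i, hi⟩ := h; exact ⟨i, by simp [hi]⟩)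
  simpa [iMin] using this

lemma iMin_min (γ : Fin n →₀ ℕ) (h : ∃ i, β i ≤ γ) {k : Fin t} (hk : k < iMin β γ h) :
    ¬ β k ≤ γ := by
  classical
  intro hle
  have hmem : k ∈ Finset.univ.filter fun i => β i ≤ γ := by simp [hle]
  exact absurd (Finset.min'_le _ _ hmem) (not_le.mpr hk)

lemma inDelta_iMin (γ : Fin n →₀ ℕ) (h : ∃ i, β i ≤ γ) : inDelta β (iMin β γ h) γ :=
  ⟨iMin_le β γ h, fun _ hk => iMin_min β γ h hk⟩

lemma inDelta_unique {γ : Fin n →₀ ℕ} {i : Fin t} (hi : inDelta β i γ)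
    (h : ∃ i, β i ≤ γ) : i = iMin β γ h := by
  rcases lt_trichotomy i (iMin β γ h) with hlt | he | hgt
  · exact absurd hi.1 (iMin_min β γ h hlt)
  · exact he
  · exact absurd (iMin_le β γ h) (hi.2 _ hgt)

open Classical in
/-- the coefficient function, defined by well-founded recursion on `degLt`. -/
def cFun : (Fin n →₀ ℕ) → Localization S :=
  degLt_wf.fix fun γ prev =>
    let E := Eval F β S G (fun γ' => if h : degLt γ' γ then prev γ' h else 0) γ
    if h : ∃ i, β i ≤ γ then ((u (iMin β γ h))⁻¹ : (Localization S)ˣ) * E else E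

lemma Eval_congr {c c' : (Fin n →₀ ℕ) → Localization S} {γ : Fin n →₀ ℕ}
    (h : ∀ γ', degLt γ' γ → c γ' = c' γ') : Eval F β S G c γ = Eval F β S G c' γ := by
  classical
  unfold Eval
  congr 1
  refine Finset.sum_congr rfl fun i _ => Finset.sum_congr rfl fun p _ => ?_
  by_cases hc : p.2 ≠ β i ∧ degLt (p.1 + β i) γ ∧ inDelta β i (p.1 + β i)
  · rw [if_pos hc, if_pos hc, h _ hc.2.1]
  · rw [if_neg hc, if_neg hc]

open Classical in
lemma cFun_eq (γ : Fin n →₀ ℕ) :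
    cFun F β S G u γ =
      if h : ∃ i, β i ≤ γ
      then ((u (iMin β γ h))⁻¹ : (Localization S)ˣ) * Eval F β S G (cFun F β S G u) γ
      else Eval F β S G (cFun F β S G u) γ := by
  have hE : Eval F β S G
        (fun γ' => if h : degLt γ' γ then cFun F β S G u γ' else 0) γ
      = Eval F β S G (cFun F β S G u) γ :=
    Eval_congr F β S G (fun γ' h' => by rw [dif_pos h'])
  conv_lhs => rw [cFun, WellFounded.fix_eq]
  simp only []
  rw [show (fun γ' => if h : degLt γ' γ then degLt_wf.fix _ γ' else 0)
      = (fun γ' => if h : degLt γ' γ then cFun F β S G u γ' else 0) from rfl]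
  by_cases h : ∃ i, β i ≤ γ
  · rw [dif_pos h, dif_pos h, hE]
  · rw [dif_neg h, dif_neg h, hE]

open Classical in
/-- the quotients `D i` -/
def Dfun (i : Fin t) : MvPowerSeries (Fin n) (Localization S) :=
  fun δ => if inDelta β i (δ + β i) then cFun F β S G u (δ + β i) else 0

open Classical in
/-- the remainder `R` -/
def Rfun : MvPowerSeries (Fin n) (Localization S) :=
  fun γ => if ∃ i, β i ≤ γ then 0 else cFun F β S G u γ

open MvPowerSeries in
lemma Gm_initExp (hβ : ∀ i, hasInitExp (F i) (β i)) (i : Fin t) {ε : Fin n →₀ ℕ}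
    (hne : ε ≠ β i) (h0 : coeff ε (Gm F S i) ≠ 0) : degLt (β i) ε := by
  have hA : MvPowerSeries.coeff ε (F i) ≠ 0 := by
    intro hz
    exact h0 (by rw [Gm, MvPowerSeries.coeff_map, hz, map_zero])
  rcases degLt_total hne with h | h
  · exact absurd ((hβ i).2 ε h) hA
  · exact h

open MvPowerSeries in
lemma coeff_mul_split (d : (Fin n →₀ ℕ) → Localization S) (i : Fin t) (γ : Fin n →₀ ℕ) :
    ∑ p ∈ Finset.HasAntidiagonal.antidiagonal γ, d p.1 * coeff p.2 (Gm F S i)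
      = (if β i ≤ γ then d (γ - β i) * coeff (β i) (Gm F S i) else 0)
        + ∑ p ∈ Finset.HasAntidiagonal.antidiagonal γ,
            if p.2 = β i then 0 else d p.1 * coeff p.2 (Gm F S i) := by
  classical
  have hsplit : ∀ p : (Fin n →₀ ℕ) × (Fin n →₀ ℕ),
      d p.1 * coeff p.2 (Gm F S i)
        = (if p.2 = β i then d p.1 * coeff p.2 (Gm F S i) else 0)
          + (if p.2 = β i then 0 else d p.1 * coeff p.2 (Gm F S i)) := by
    intro p; by_cases h : p.2 = β i <;> simp [h]
  rw [Finset.sum_congr rfl fun p _ => hsplit p, Finset.sum_add_distrib]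
  congr 1
  by_cases hle : β i ≤ γ
  · rw [if_pos hle]
    have h0 : ∀ b ∈ Finset.HasAntidiagonal.antidiagonal γ, b ≠ (γ - β i, β i) →
        (if b.2 = β i then d b.1 * coeff b.2 (Gm F S i) else 0) = 0 := by
      rintro ⟨p1, p2⟩ hp hne
      rw [Finset.HasAntidiagonal.mem_antidiagonal] at hp
      by_cases h2 : p2 = β i
      · exfalso
        apply hne
        subst h2
        have h3 : p1 = γ - β i := eq_tsub_of_add_eq (by simpa using hp)
        simp [h3]
      · rw [if_neg h2]
    have h1 : (γ - β i, β i) ∉ Finset.HasAntidiagonal.antidiagonal γ →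
        (if ((γ - β i, β i) : (Fin n →₀ ℕ) × (Fin n →₀ ℕ)).2 = β i
          then d (γ - β i, β i).1 * coeff (γ - β i, β i).2 (Gm F S i)
          else 0) = 0 := fun hmem =>
      absurd (by rw [Finset.HasAntidiagonal.mem_antidiagonal]; exact tsub_add_cancel_of_le hle) hmem
    rw [Finset.sum_eq_single _ h0 h1, if_pos rfl]
  · rw [if_neg hle]
    refine Finset.sum_eq_zero fun p hp => ?_
    rw [Finset.HasAntidiagonal.mem_antidiagonal] at hp
    by_cases h2 : p.2 = β i
    · exfalso; exact hle (by rw [← h2, ← hp]; exact le_add_self)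
    · rw [if_neg h2]

open MvPowerSeries in
open Classical in
lemma second_sum_eq (hβ : ∀ i, hasInitExp (F i) (β i)) (γ : Fin n →₀ ℕ) (i : Fin t) :
    ∑ p ∈ Finset.HasAntidiagonal.antidiagonal γ,
        (if p.2 = β i then 0
          else (if inDelta β i (p.1 + β i) then cFun F β S G u (p.1 + β i) else 0)
            * coeff p.2 (Gm F S i))
      = ∑ p ∈ Finset.HasAntidiagonal.antidiagonal γ,
          (if p.2 ≠ β i ∧ degLt (p.1 + β i) γ ∧ inDelta β i (p.1 + β i)
            then cFun F β S G u (p.1 + β i) else 0) * coeff p.2 (Gm F S i) := by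
  classical
  refine Finset.sum_congr rfl fun p hp => ?_
  rw [Finset.HasAntidiagonal.mem_antidiagonal] at hp
  by_cases h2 : p.2 = β i
  · rw [if_pos h2, if_neg (by simp [h2]), zero_mul]
  · rw [if_neg h2]
    by_cases hg : coeff p.2 (Gm F S i) = 0
    · rw [hg, mul_zero, mul_zero]
    · have hdl : degLt (p.1 + β i) γ := by
        have h1 : degLt (β i) p.2 := Gm_initExp F β S hβ i h2 hg
        have h3 : degLt (β i + p.1) (p.2 + p.1) := degLt_add_right p.1 h1
        rw [add_comm (β i) p.1, add_comm p.2 p.1] at h3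
        rwa [hp] at h3
      by_cases hin : inDelta β i (p.1 + β i)
      · rw [if_pos hin, if_pos ⟨h2, hdl, hin⟩]
      · rw [if_neg hin, if_neg (by tauto), zero_mul]

open MvPowerSeries in
open Classical in
/-- The main identity: the constructed `D`, `R` solve the division problem. -/
lemma main_identity (hβ : ∀ i, hasInitExp (F i) (β i))
    (hu : ∀ i, (u i : Localization S)
      = algebraMap A (Localization S) (MvPowerSeries.coeff (β i) (F i)))
    (γ : Fin n →₀ ℕ) :
    coeff γ
        ((∑ i, Dfun F β S G u i * Gm F S i) + Rfun F β S G u) = coeff γ G := by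
  classical
  set c := cFun F β S G u with hc
  have hGm : ∀ i, coeff (β i) (Gm F S i) = (u i : Localization S) := by
    intro i
    rw [Gm, MvPowerSeries.coeff_map, hu i]
  have hDcoeff : ∀ i δ, coeff δ (Dfun F β S G u i)
      = if inDelta β i (δ + β i) then c (δ + β i) else 0 := fun i δ => rfl
  rw [map_add, map_sum]
  -- rewrite each product coefficient
  have hstep : ∀ i, coeff γ (Dfun F β S G u i * Gm F S i)
      = (if inDelta β i γ then c γ * coeff (β i) (Gm F S i) else 0)
        + ∑ p ∈ Finset.HasAntidiagonal.antidiagonal γ,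
            (if p.2 ≠ β i ∧ degLt (p.1 + β i) γ ∧ inDelta β i (p.1 + β i)
              then c (p.1 + β i) else 0) * coeff p.2 (Gm F S i) := by
    intro i
    rw [MvPowerSeries.coeff_mul,
      coeff_mul_split F β S (fun δ => coeff δ (Dfun F β S G u i)) i γ]
    congr 1
    · by_cases hle : β i ≤ γ
      · rw [if_pos hle, hDcoeff, tsub_add_cancel_of_le hle]
        by_cases hin : inDelta β i γ
        · rw [if_pos hin, if_pos hin]
        · rw [if_neg hin, if_neg hin, zero_mul]
      · rw [if_neg hle, if_neg (fun hin => hle hin.1)]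
    · rw [← second_sum_eq F β S G u hβ γ i]
      refine Finset.sum_congr rfl fun p _ => ?_
      rw [hDcoeff]
  rw [Finset.sum_congr rfl fun i _ => hstep i, Finset.sum_add_distrib]
  have hEval : ∑ i, ∑ p ∈ Finset.HasAntidiagonal.antidiagonal γ,
      (if p.2 ≠ β i ∧ degLt (p.1 + β i) γ ∧ inDelta β i (p.1 + β i)
        then c (p.1 + β i) else 0) * coeff p.2 (Gm F S i)
      = coeff γ G - Eval F β S G c γ := by
    rw [Eval]; ring
  rw [hEval]
  by_cases h : ∃ i, β i ≤ γ
  · have hfirst : ∑ i, (if inDelta β i γ then c γ * coeff (β i) (Gm F S i) else 0)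
        = c γ * (u (iMin β γ h) : Localization S) := by
      rw [Finset.sum_eq_single (iMin β γ h)]
      · rw [if_pos (inDelta_iMin β γ h), hGm]
      · intro i _ hne
        rw [if_neg (fun hin => hne (inDelta_unique β hin h))]
      · intro hmem; exact absurd (Finset.mem_univ _) hmem
    have hR : coeff γ (Rfun F β S G u) = 0 := by
      show (if ∃ i, β i ≤ γ then 0 else c γ) = 0
      rw [if_pos h]
    have hcγ : c γ = ((u (iMin β γ h))⁻¹ : (Localization S)ˣ) * Eval F β S G c γ := by
      rw [hc, cFun_eq, dif_pos h]
    rw [hfirst, hR, hcγ]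
    have : ((u (iMin β γ h))⁻¹ : (Localization S)ˣ) * Eval F β S G c γ
        * (u (iMin β γ h) : Localization S) = Eval F β S G c γ := by
      rw [mul_comm, ← mul_assoc, Units.mul_inv, one_mul]
    rw [this]; ring
  · have hfirst : ∑ i, (if inDelta β i γ then c γ * coeff (β i) (Gm F S i) else 0)
        = 0 := by
      refine Finset.sum_eq_zero fun i _ => if_neg (fun hin => h ⟨i, hin.1⟩)
    have hR : coeff γ (Rfun F β S G u) = Eval F β S G c γ := by
      show (if ∃ i, β i ≤ γ then 0 else c γ) = _
      rw [if_neg h, hc, cFun_eq, dif_neg h]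
    rw [hfirst, hR]; ring

open MvPowerSeries in
open Classical in
/-- Uniqueness: a homogeneous solution with the right supports is zero. -/
lemma zero_of_div (hβ : ∀ i, hasInitExp (F i) (β i))
    (hu : ∀ i, (u i : Localization S)
      = algebraMap A (Localization S) (MvPowerSeries.coeff (β i) (F i)))
    (D' : Fin t → MvPowerSeries (Fin n) (Localization S))
    (R' : MvPowerSeries (Fin n) (Localization S))
    (heq : (∑ i, D' i * Gm F S i) + R' = 0)
    (hR : ∀ γ, coeff γ R' ≠ 0 → ¬ ∃ i, β i ≤ γ)
    (hD : ∀ i δ, coeff δ (D' i) ≠ 0 → ∀ k, k < i → ¬ β k ≤ δ + β i) :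
    (∀ i, D' i = 0) ∧ R' = 0 := by
  classical
  have key : ∀ γ : Fin n →₀ ℕ,
      (∀ i δ, δ + β i = γ → coeff δ (D' i) = 0)
        ∧ coeff γ R' = 0 := by
    intro γ
    induction γ using degLt_wf.induction with
    | _ γ IH =>
    have h0 : (∑ i, ∑ p ∈ Finset.HasAntidiagonal.antidiagonal γ,
        coeff p.1 (D' i) * coeff p.2 (Gm F S i))
        + coeff γ R' = 0 := by
      have h1 := congrArg (coeff γ) heq
      rw [map_add, map_sum, map_zero] at h1
      simpa only [MvPowerSeries.coeff_mul] using h1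
    have hterm : ∀ i, ∑ p ∈ Finset.HasAntidiagonal.antidiagonal γ,
        coeff p.1 (D' i) * coeff p.2 (Gm F S i)
        = if β i ≤ γ
          then coeff (γ - β i) (D' i)
            * coeff (β i) (Gm F S i)
          else 0 := by
      intro i
      rw [coeff_mul_split F β S (fun δ => coeff δ (D' i)) i γ]
      have hz : ∑ p ∈ Finset.HasAntidiagonal.antidiagonal γ,
          (if p.2 = β i then 0
            else coeff p.1 (D' i) * coeff p.2 (Gm F S i))
          = 0 := by
        refine Finset.sum_eq_zero fun p hp => ?_
        rw [Finset.HasAntidiagonal.mem_antidiagonal] at hp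
        by_cases h2 : p.2 = β i
        · rw [if_pos h2]
        · rw [if_neg h2]
          by_cases hg : coeff p.2 (Gm F S i) = 0
          · rw [hg, mul_zero]
          · have hdl : degLt (p.1 + β i) γ := by
              have h1 : degLt (β i) p.2 := Gm_initExp F β S hβ i h2 hg
              have h3 : degLt (β i + p.1) (p.2 + p.1) := degLt_add_right p.1 h1
              rw [add_comm (β i) p.1, add_comm p.2 p.1] at h3
              rwa [hp] at h3
            rw [(IH _ hdl).1 i p.1 rfl, zero_mul]
      rw [hz, add_zero]
    rw [Finset.sum_congr rfl fun i _ => hterm i] at h0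
    by_cases h : ∃ i, β i ≤ γ
    · have hRγ : coeff γ R' = 0 := by
        by_contra hne; exact (hR γ hne) h
      have hDia : ∀ i, i ≠ iMin β γ h →
          (if β i ≤ γ
            then coeff (γ - β i) (D' i)
              * coeff (β i) (Gm F S i)
            else 0) = 0 := by
        intro i hne
        by_cases hle : β i ≤ γ
        · rw [if_pos hle]
          by_cases hzz : coeff (γ - β i) (D' i) = 0
          · rw [hzz, zero_mul]
          · exfalso
            have hin : inDelta β i γ := ⟨hle, fun k hk => by
              have h4 := hD i (γ - β i) hzz k hk
              rwa [tsub_add_cancel_of_le hle] at h4⟩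
            exact hne (inDelta_unique β hin h)
        · rw [if_neg hle]
      rw [Finset.sum_eq_single (iMin β γ h) (fun i _ hne => hDia i hne)
        (fun hmem => absurd (Finset.mem_univ _) hmem), if_pos (iMin_le β γ h), hRγ,
        add_zero] at h0
      have hGm : coeff (β (iMin β γ h)) (Gm F S (iMin β γ h))
          = (u (iMin β γ h) : Localization S) := by
        rw [Gm, MvPowerSeries.coeff_map, hu]
      rw [hGm] at h0
      have hD0 : coeff (γ - β (iMin β γ h)) (D' (iMin β γ h)) = 0 :=
        (Units.mul_left_eq_zero _).mp h0
      refine ⟨?_, hRγ⟩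
      intro i δ hδ
      have hle : β i ≤ γ := hδ ▸ le_add_self
      have hδ' : δ = γ - β i := eq_tsub_of_add_eq hδ
      by_cases hzz : coeff δ (D' i) = 0
      · exact hzz
      · exfalso
        have hin : inDelta β i γ := ⟨hle, fun k hk => by
          have h4 := hD i δ hzz k hk
          rwa [hδ] at h4⟩
        have hii : i = iMin β γ h := inDelta_unique β hin h
        exact hzz (by rw [hδ', hii]; exact hD0)
    · have hsz : (∑ i, if β i ≤ γ
          then coeff (γ - β i) (D' i)
            * coeff (β i) (Gm F S i)
          else 0) = 0 :=
        Finset.sum_eq_zero fun i _ => if_neg (fun hle => h ⟨i, hle⟩)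
      rw [hsz, zero_add] at h0
      exact ⟨fun i δ hδ => absurd ⟨i, hδ ▸ le_add_self⟩ h, h0⟩
  constructor
  · intro i
    apply MvPowerSeries.ext
    intro δ
    rw [map_zero]
    exact (key (δ + β i)).1 i δ rfl
  · apply MvPowerSeries.ext
    intro γ
    rw [map_zero]
    exact (key γ).2

end Constr



end DivAux

/-- Grauert–Hironaka formal division. Let `A` be an integral domain,
`F₁, …, F_t` nonzero power series with initial exponents `βⁱ` and initial coefficients
`aᵢ`, and `S` the multiplicative set generated by the `aᵢ`. Every `F ∈ S⁻¹A[[X]]` (in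
particular every `F ∈ A[[X]]`) has a unique expression `F = Σᵢ Dᵢ·Fᵢ + R` with
`Supp R ⊆ Δ̄` and `Supp Dᵢ + βⁱ ⊆ Δᵢ`. -/


theorem stmt_4 {A : Type*} [CommRing A] [IsDomain A] (n t : ℕ)
    (F : Fin t → MvPowerSeries (Fin n) A) (hF : ∀ i, F i ≠ 0)
    (β : Fin t → (Fin n →₀ ℕ)) (hβ : ∀ i, hasInitExp (F i) (β i))
    (S : Submonoid A)
    (hS : S = Submonoid.closure (Set.range fun i => MvPowerSeries.coeff (β i) (F i)))
    (G : MvPowerSeries (Fin n) (Localization S)) :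
    ∃! DR : (Fin t → MvPowerSeries (Fin n) (Localization S)) ×
        MvPowerSeries (Fin n) (Localization S),
      G = (∑ i, DR.1 i * MvPowerSeries.map (algebraMap A (Localization S)) (F i))
          + DR.2 ∧
      (∀ γ ∈ psSupport DR.2, ¬∃ (i : Fin t) (δ : Fin n →₀ ℕ), γ = β i + δ) ∧
      (∀ i : Fin t, ∀ γ ∈ psSupport (DR.1 i),
        (∃ δ : Fin n →₀ ℕ, γ + β i = β i + δ) ∧
          ∀ k : Fin t, k < i → ¬∃ δ : Fin n →₀ ℕ, γ + β i = β k + δ) := by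
  classical
  have hunit : ∀ i, IsUnit (algebraMap A (Localization S) (MvPowerSeries.coeff (β i) (F i))) := by
    intro i
    exact IsLocalization.map_units (M := S) (Localization S)
      ⟨_, by rw [hS]; exact Submonoid.subset_closure ⟨i, rfl⟩⟩
  set u : Fin t → (Localization S)ˣ := fun i => (hunit i).unit with hu'
  have hu : ∀ i, (u i : Localization S)
      = algebraMap A (Localization S) (MvPowerSeries.coeff (β i) (F i)) :=
    fun i => (hunit i).unit_spec
  have hmap : (fun i => MvPowerSeries.map (algebraMap A (Localization S)) (F i))
      = DivAux.Gm F S := rfl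
  have heq1 : G = (∑ i, DivAux.Dfun F β S G u i * DivAux.Gm F S i) + DivAux.Rfun F β S G u :=
    MvPowerSeries.ext fun γ => (DivAux.main_identity F β S G u hβ hu γ).symm
  refine ⟨(DivAux.Dfun F β S G u, DivAux.Rfun F β S G u), ⟨?_, ?_, ?_⟩, ?_⟩
  · exact heq1
  · -- support of R
    intro γ hγ
    have h1 : ¬ ∃ i, β i ≤ γ := by
      intro h
      apply hγ
      show (if ∃ i, β i ≤ γ then 0 else DivAux.cFun F β S G u γ) = 0
      rw [if_pos h]
    rintro ⟨i, δ, hδ⟩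
    exact h1 ⟨i, le_iff_exists_add.mpr ⟨δ, hδ⟩⟩
  · -- support of the D i
    intro i γ hγ
    have hin : DivAux.inDelta β i (γ + β i) := by
      by_contra hni
      exact hγ (show (if DivAux.inDelta β i (γ + β i)
        then DivAux.cFun F β S G u (γ + β i) else 0) = 0 from if_neg hni)
    refine ⟨⟨γ, add_comm γ (β i)⟩, ?_⟩
    rintro k hk ⟨δ, hδ⟩
    exact hin.2 k hk (le_iff_exists_add.mpr ⟨δ, hδ⟩)
  · -- uniqueness
    rintro ⟨D₂, R₂⟩ ⟨heq2, hR2, hD2⟩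
    set D' : Fin t → MvPowerSeries (Fin n) (Localization S) :=
      fun i => D₂ i - DivAux.Dfun F β S G u i with hD'
    set R' : MvPowerSeries (Fin n) (Localization S) := R₂ - DivAux.Rfun F β S G u with hR'
    have h0 : (∑ i, D' i * DivAux.Gm F S i) + R' = 0 := by
      have hsub : ∑ i, D' i * DivAux.Gm F S i
          = (∑ i, D₂ i * DivAux.Gm F S i) - ∑ i, DivAux.Dfun F β S G u i * DivAux.Gm F S i := by
        rw [← Finset.sum_sub_distrib]
        exact Finset.sum_congr rfl fun i _ => by rw [hD', sub_mul]
      rw [hsub, hR']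
      have e2 : G = (∑ i, D₂ i * DivAux.Gm F S i) + R₂ := heq2
      linear_combination heq1 - e2
    have hRdiff : ∀ γ, MvPowerSeries.coeff γ R' ≠ 0 → ¬ ∃ i, β i ≤ γ := by
      intro γ hne h
      rw [hR', map_sub] at hne
      have : MvPowerSeries.coeff γ R₂ ≠ 0
          ∨ MvPowerSeries.coeff γ (DivAux.Rfun F β S G u) ≠ 0 := by
        by_contra hc
        push_neg at hc
        rw [hc.1, hc.2, sub_zero] at hne
        exact hne rfl
      obtain ⟨i, hi⟩ := h
      obtain ⟨δ, hδ⟩ := le_iff_exists_add.mp hi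
      rcases this with h2 | h2
      · exact hR2 γ h2 ⟨i, δ, hδ⟩
      · apply h2
        show (if ∃ i, β i ≤ γ then 0 else DivAux.cFun F β S G u γ) = 0
        rw [if_pos ⟨i, hi⟩]
    have hDdiff : ∀ i δ, MvPowerSeries.coeff δ (D' i) ≠ 0 →
        ∀ k, k < i → ¬ β k ≤ δ + β i := by
      intro i δ hne k hk hle
      rw [hD', map_sub] at hne
      have : MvPowerSeries.coeff δ (D₂ i) ≠ 0
          ∨ MvPowerSeries.coeff δ (DivAux.Dfun F β S G u i) ≠ 0 := by
        by_contra hc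
        push_neg at hc
        rw [hc.1, hc.2, sub_zero] at hne
        exact hne rfl
      obtain ⟨ε, hε⟩ := le_iff_exists_add.mp hle
      rcases this with h2 | h2
      · exact (hD2 i δ h2).2 k hk ⟨ε, hε⟩
      · have hin : DivAux.inDelta β i (δ + β i) := by
          by_contra hni
          exact h2 (show (if DivAux.inDelta β i (δ + β i)
            then DivAux.cFun F β S G u (δ + β i) else 0) = 0 from if_neg hni)
        exact hin.2 k hk hle
    obtain ⟨hDz, hRz⟩ := DivAux.zero_of_div F β S u hβ hu D' R' h0 hRdiff hDdiff
    rw [Prod.mk.injEq]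
    constructor
    · funext i
      have := hDz i
      rw [hD'] at this
      exact sub_eq_zero.mp this
    · rw [hR'] at hRz
      exact sub_eq_zero.mp hRz

end
end

section
/- Let (A, m) be a Noetherian local ring, I an m-primary ideal, g_1,…,g_n ∈ I and h ∈ m such that K = (g_1,…,g_n, h) is a joint reduction of I^{[n]}, m, i.e. there is k ∈ ℕ* with ((g_1,…,g_n)I^{n−1}m + h·I^n)·(I^n m)^k = I^{n(k+1)} m^{k+1}. Set A' = A/(h), with maximal ideal m', J' = (g_1,…,g_n)·A' and I' = I·A'. Then J' is a reduction of I', i.e. J' ⊂ I' ⊂ J̄' (equivalently J' I'^k = I'^{k+1} for some k), and for every rank-one discrete valuation v on A' one has v(J') = v(I'). -/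
open Filter IsLocalRing
open scoped ENNReal NNReal

noncomputable section

/-- `ord_I(x) = max {m : x ∈ I^m}` (with value `⊤` for `x = 0`). -/
def adicOrder {A : Type*} [CommRing A] (I : Ideal A) (x : A) : ℕ∞ :=
  ⨆ n ∈ {n : ℕ | x ∈ I ^ n}, (n : ℕ∞)

/-- The asymptotic Samuel function `v̄_I(x) = lim_k ord_I(x^k)/k`. -/
def samuelFn {A : Type*} [CommRing A] (I : Ideal A) (x : A) : ℝ≥0∞ :=
  Filter.limsup (fun k : ℕ => (adicOrder I (x ^ k) : ℝ≥0∞) / (k : ℝ≥0∞)) Filter.atTop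

/-- `v̄_I(J) = min_{x ∈ J} v̄_I(x)`. -/
def samuelIdeal {A : Type*} [CommRing A] (I J : Ideal A) : ℝ≥0∞ :=
  ⨅ x ∈ J, samuelFn I x

/-- Length of a module, as the Krull dimension of its submodule lattice. -/
def moduleLength (R M : Type*) [Ring R] [AddCommGroup M] [Module R M] : ℝ≥0∞ :=
  (((Order.krullDim (Submodule R M)).unbotD 0 : ℕ∞) : ℝ≥0∞)

/-- Hilbert–Samuel multiplicity (normalized in degree `d`) of a module w.r.t. an ideal:
`e(I; M) = lim_t d! · ℓ(M/I^tM) / t^d`. -/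
def multMod {A : Type*} [CommRing A] (d : ℕ) (I : Ideal A) (M : Type*) [AddCommGroup M]
    [Module A M] : ℝ≥0∞ :=
  Filter.limsup (fun t : ℕ =>
    (Nat.factorial d : ℝ≥0∞) * moduleLength A (M ⧸ (I ^ t • (⊤ : Submodule A M))) /
      (t : ℝ≥0∞) ^ d) Filter.atTop

/-- Hilbert–Samuel multiplicity `e(I)` (in dimension `d`). -/
def hsMult {A : Type*} [CommRing A] (d : ℕ) (I : Ideal A) : ℝ≥0∞ :=
  multMod d I A

/-- `c` is the generic value of `(v̄_{I·A_H}(m_H))⁻¹` as `H` ranges over a dense Zariski-open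
set of `i`-planes, an `i`-plane `H` being cut out by `n+1-i` generic linear forms in the fixed
regular system of parameters `X`. -/
def IsGenericLojExponent {A : Type*} [CommRing A] [IsLocalRing A] (n : ℕ)
    (X : Fin (n + 1) → A) (I : Ideal A) (i : ℕ) (c : ℝ≥0∞) : Prop :=
  ∃ P : MvPolynomial (Fin (n + 1 - i) × Fin (n + 1)) (ResidueField A), P ≠ 0 ∧
    ∀ a : Fin (n + 1 - i) → Fin (n + 1) → A,
      MvPolynomial.eval (fun p => residue A (a p.1 p.2)) P ≠ 0 →
      (samuelIdeal
        (I.map (Ideal.Quotient.mk (Ideal.span (Set.range fun j => ∑ k, a j k * X k))))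
        ((maximalIdeal A).map
          (Ideal.Quotient.mk (Ideal.span (Set.range fun j => ∑ k, a j k * X k)))))⁻¹ = c

/-- The integral closure of an ideal: elements satisfying a relation of integral dependence
`x^d + c₁x^{d-1} + ⋯ + c_d = 0` with `cᵢ ∈ Iⁱ`. -/
def intClosure {A : Type*} [CommRing A] (I : Ideal A) : Set A :=
  {x | ∃ d : ℕ, 0 < d ∧ ∃ c : ℕ → A, (∀ i, c i ∈ I ^ i) ∧
    x ^ d + ∑ i ∈ Finset.range d, c (i + 1) * x ^ (d - (i + 1)) = 0}

/-- `ord_J(I) = min_{x ∈ I} ord_J(x) = max {k : I ⊆ J^k}`. -/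
def adicOrderIdeal {A : Type*} [CommRing A] (J I : Ideal A) : ℕ∞ :=
  ⨆ k ∈ {k : ℕ | I ≤ J ^ k}, (k : ℕ∞)

end

set_option maxHeartbeats 1000000 in
set_option synthInstance.maxHeartbeats 1000000 in
open Polynomial in
theorem aux_key {B : Type*} [CommRing B] [IsNoetherianRing B]
    (G J : Ideal B) (hGJ : G ≤ J) (c0 : ℕ) (hstep : ∀ p : ℕ, J ^ (p + c0) ≤ G ^ p) :
    (∃ N : ℕ, G * J ^ N = J ^ (N + 1)) ∧ (∀ x ∈ J, x ∈ intClosure G) := by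
  classical
  have hstep' : ∀ q : ℕ, J ^ q ≤ G ^ (q - c0) := by
    intro q
    rcases le_or_gt q c0 with hq | hq
    · simp [Nat.sub_eq_zero_of_le hq, Ideal.one_eq_top]
    · have := hstep (q - c0)
      rwa [Nat.sub_add_cancel hq.le] at this
  set R' := reesAlgebra G with hR'
  have hsmul : ∀ (r : ↥R') (p : B[X]), r • p = (↑r : B[X]) * p := by
    intro r p
    rw [Algebra.smul_def]
    rfl
  -- the submodule of polys with coeffs in powers of J
  let P : Submodule ↥R' B[X] :=
    { carrier := {p : B[X] | ∀ i, p.coeff i ∈ J ^ i}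
      add_mem' := fun hf hg i => by rw [coeff_add]; exact add_mem (hf i) (hg i)
      zero_mem' := fun i => by simp
      smul_mem' := fun r p hp i => by
        rw [hsmul, coeff_mul]
        refine Ideal.sum_mem _ ?_
        rintro ⟨j, k⟩ e
        rw [← Finset.HasAntidiagonal.mem_antidiagonal.mp e, pow_add]
        exact Ideal.mul_mem_mul (Ideal.pow_right_mono hGJ j (r.2 j)) (hp k) }
  have hmemP : ∀ p : B[X], p ∈ P ↔ ∀ i, p.coeff i ∈ J ^ i := fun _ => Iff.rfl
  -- the big f.g. module containing P
  let NN : Submodule ↥R' B[X] := Submodule.span ↥R' ((fun j => (X : B[X]) ^ j) '' Set.Iic c0)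
  have hPN : P ≤ NN := by
    intro p hp
    rw [p.as_sum_support]
    refine Submodule.sum_mem _ fun i _ => ?_
    rcases le_or_gt i c0 with hi | hi
    · have hmem : (X : B[X]) ^ i ∈ NN :=
        Submodule.subset_span ⟨i, Set.mem_Iic.mpr hi, rfl⟩
      have : (monomial i (p.coeff i) : B[X]) =
          (⟨C (p.coeff i), (reesAlgebra G).algebraMap_mem (p.coeff i)⟩ : ↥R') • (X : B[X]) ^ i := by
        rw [hsmul, C_mul_X_pow_eq_monomial]
      rw [this]
      exact Submodule.smul_mem _ _ hmem
    · have hmem : (X : B[X]) ^ c0 ∈ NN := Submodule.subset_span ⟨c0, Set.mem_Iic.mpr le_rfl, rfl⟩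
      have hcoeff : p.coeff i ∈ G ^ (i - c0) := hstep' i (hp i)
      have hr : (monomial (i - c0) (p.coeff i) : B[X]) ∈ reesAlgebra G :=
        reesAlgebra.monomial_mem.mpr hcoeff
      have : (monomial i (p.coeff i) : B[X]) =
          (⟨monomial (i - c0) (p.coeff i), hr⟩ : ↥R') • (X : B[X]) ^ c0 := by
        rw [hsmul]
        show _ = (monomial (i - c0) (p.coeff i) : B[X]) * X ^ c0
        rw [X_pow_eq_monomial, monomial_mul_monomial, mul_one, Nat.sub_add_cancel hi.le]
      rw [this]
      exact Submodule.smul_mem _ _ hmem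
  
  haveI : IsNoetherian ↥R' ↥NN :=
    isNoetherian_of_fg_of_noetherian _ (Submodule.fg_span ((Set.finite_Iic c0).image _))
  have hPfg : P.FG := by
    have h1 : (P.comap NN.subtype).FG := IsNoetherian.noetherian _
    have h2 : Submodule.map NN.subtype (P.comap NN.subtype) = P := by
      rw [Submodule.map_comap_subtype]
      exact inf_eq_right.mpr hPN
    rw [← h2]
    exact h1.map _
  obtain ⟨S, hS⟩ := hPfg
  set D := S.sup Polynomial.natDegree with hD
  have claim : ∀ p ∈ P, ∀ q : ℕ, D < q → p.coeff q ∈ G * J ^ (q - 1) := by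
    intro p hp
    rw [← hS] at hp
    refine Submodule.span_induction ?_ ?_ ?_ ?_ hp
    · intro p hpS q hq
      have : p.natDegree < q := lt_of_le_of_lt (Finset.le_sup hpS) hq
      rw [Polynomial.coeff_eq_zero_of_natDegree_lt this]
      exact zero_mem _
    · intro q hq; simp
    · intro p1 p2 h1 h2 ih1 ih2 q hq
      rw [coeff_add]; exact add_mem (ih1 q hq) (ih2 q hq)
    · intro rr p1 hp1 ih q hq
      have hxP : p1 ∈ P := hS ▸ hp1
      rw [hsmul, coeff_mul]
      refine Ideal.sum_mem _ ?_
      rintro ⟨a, b⟩ e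
      have hab : a + b = q := Finset.HasAntidiagonal.mem_antidiagonal.mp e
      have hra : (↑rr : B[X]).coeff a ∈ G ^ a := rr.2 a
      rcases le_or_gt b D with hb | hb
      · obtain ⟨a', rfl⟩ : ∃ a', a = a' + 1 := ⟨a - 1, by omega⟩
        have hmem : (↑rr : B[X]).coeff (a' + 1) * p1.coeff b ∈ G ^ (a' + 1) * J ^ b :=
          Ideal.mul_mem_mul hra (hxP b)
        refine SetLike.le_def.mp ?_ hmem
        have he : G ^ (a' + 1) * J ^ b = G * (G ^ a' * J ^ b) := by ring
        rw [he]
        refine Ideal.mul_mono_right ?_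
        calc G ^ a' * J ^ b ≤ J ^ a' * J ^ b :=
              Ideal.mul_mono_left (Ideal.pow_right_mono hGJ a')
          _ = J ^ (q - 1) := by rw [← pow_add]; congr 1; omega
      · have hmem : (↑rr : B[X]).coeff a * p1.coeff b ∈ G ^ a * (G * J ^ (b - 1)) :=
          Ideal.mul_mem_mul hra (ih b hb)
        refine SetLike.le_def.mp ?_ hmem
        have he : G ^ a * (G * J ^ (b - 1)) = G * (G ^ a * J ^ (b - 1)) := by ring
        rw [he]
        refine Ideal.mul_mono_right ?_
        calc G ^ a * J ^ (b - 1) ≤ J ^ a * J ^ (b - 1) :=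
              Ideal.mul_mono_left (Ideal.pow_right_mono hGJ a)
          _ = J ^ (q - 1) := by rw [← pow_add]; congr 1; omega
  constructor
  · refine ⟨D, le_antisymm ?_ ?_⟩
    · calc G * J ^ D ≤ J * J ^ D := Ideal.mul_mono_left hGJ
        _ = J ^ (D + 1) := (pow_succ' J D).symm
    · intro x hx
      have hP : (monomial (D + 1) x : B[X]) ∈ P := by
        intro i
        rw [coeff_monomial]
        split_ifs with hh
        · subst hh; exact hx
        · exact zero_mem _
      have := claim _ hP (D + 1) (by omega)
      rw [coeff_monomial, if_pos rfl] at this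
      simpa using this
  · intro x hx
    set z : B[X] := monomial 1 x with hz
    have hzpow : ∀ j : ℕ, z ^ j ∈ P := by
      intro j i
      rw [hz, monomial_pow, one_mul, coeff_monomial]
      split_ifs with hh
      · subst hh; exact Ideal.pow_mem_pow hx j
      · exact zero_mem _
    let f : ℕ →o Submodule ↥R' ↥NN :=
      ⟨fun D' => Submodule.comap NN.subtype
          (Submodule.span ↥R' (Set.range fun j : Fin (D' + 1) => z ^ (j : ℕ))),
        by
          intro a b hab
          refine Submodule.comap_mono (Submodule.span_mono ?_)
          rintro _ ⟨j, rfl⟩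
          exact ⟨⟨(j : ℕ), by omega⟩, rfl⟩⟩
    obtain ⟨n, hn⟩ := monotone_stabilizes_iff_noetherian.mpr inferInstance f
    have h1 : z ^ (n + 1) ∈
        Submodule.span ↥R' (Set.range fun j : Fin (n + 2) => z ^ (j : ℕ)) :=
      Submodule.subset_span ⟨⟨n + 1, by omega⟩, rfl⟩
    have h2 : (⟨z ^ (n + 1), hPN (hzpow (n + 1))⟩ : ↥NN) ∈ f (n + 1) := h1
    rw [← hn (n + 1) (by omega)] at h2
    have h3 : z ^ (n + 1) ∈
        Submodule.span ↥R' (Set.range fun j : Fin (n + 1) => z ^ (j : ℕ)) := h2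
    obtain ⟨r, hr⟩ := (Submodule.mem_span_range_iff_exists_fun _).mp h3
    have hterm : ∀ i : Fin (n + 1), (r i • z ^ (i : ℕ)).coeff (n + 1)
        = ((↑(r i) : B[X]).coeff (n + 1 - (i : ℕ))) * x ^ (i : ℕ) := by
      intro i
      rw [hsmul, hz, monomial_pow, one_mul]
      rw [← C_mul_X_pow_eq_monomial, ← mul_assoc, coeff_mul_X_pow',
        if_pos (by omega : (i : ℕ) ≤ n + 1), coeff_mul_C]
    have hcoeffd : x ^ (n + 1) =
        ∑ i : Fin (n + 1), ((↑(r i) : B[X]).coeff (n + 1 - (i : ℕ))) * x ^ (i : ℕ) := by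
      calc x ^ (n + 1) = (z ^ (n + 1)).coeff (n + 1) := by
            rw [hz, monomial_pow, one_mul, coeff_monomial, if_pos rfl]
        _ = (∑ i : Fin (n + 1), r i • z ^ (i : ℕ)).coeff (n + 1) := by rw [hr]
        _ = ∑ i : Fin (n + 1), (r i • z ^ (i : ℕ)).coeff (n + 1) :=
            finset_sum_coeff _ _ _
        _ = _ := Finset.sum_congr rfl fun i _ => hterm i
    let u : ℕ → B := fun j =>
      if hj : j < n + 1 then ((↑(r ⟨j, hj⟩) : B[X]).coeff (n + 1 - j)) else 0
    have hu : ∀ j, j < n + 1 → u j ∈ G ^ (n + 1 - j) := by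
      intro j hj
      simp only [u, dif_pos hj]
      exact (r ⟨j, hj⟩).2 (n + 1 - j)
    have hrep : x ^ (n + 1) = ∑ j ∈ Finset.range (n + 1), u j * x ^ j := by
      rw [hcoeffd, ← Fin.sum_univ_eq_sum_range (fun j => u j * x ^ j) (n + 1)]
      refine Finset.sum_congr rfl fun i _ => ?_
      simp only [u, dif_pos i.isLt]
    refine ⟨n + 1, Nat.succ_pos n,
      fun i => if hi : 0 < i ∧ i ≤ n + 1 then -u (n + 1 - i) else 0, ?_, ?_⟩
    · intro i
      by_cases hi : 0 < i ∧ i ≤ n + 1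
      · simp only [dif_pos hi]
        refine neg_mem ?_
        have := hu (n + 1 - i) (by omega)
        rwa [Nat.sub_sub_self hi.2] at this
      · simp only [dif_neg hi]; exact zero_mem _
    · have hc : ∀ i ∈ Finset.range (n + 1),
          (if hi : 0 < i + 1 ∧ i + 1 ≤ n + 1 then -u (n + 1 - (i + 1)) else 0) *
              x ^ (n + 1 - (i + 1))
            = -(u (n + 1 - 1 - i) * x ^ (n + 1 - 1 - i)) := by
        intro i hi
        have hi' : i < n + 1 := Finset.mem_range.mp hi
        rw [dif_pos ⟨Nat.succ_pos i, by omega⟩]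
        have h1 : n + 1 - (i + 1) = n + 1 - 1 - i := by omega
        rw [h1, neg_mul]
      rw [Finset.sum_congr rfl hc, Finset.sum_neg_distrib,
        Finset.sum_range_reflect (fun j => u j * x ^ j) (n + 1), ← hrep, add_neg_cancel]



theorem aux_val {B : Type*} [CommRing B] (G J : Ideal B) (hGJ : G ≤ J)
    (hint : ∀ x ∈ J, x ∈ intClosure G) (v : AddValuation B ℕ∞) :
    (⨅ x ∈ G, v x) = ⨅ x ∈ J, v x := by
  classical
  refine le_antisymm (le_iInf₂ fun x hx => ?_) (biInf_mono fun x => @hGJ x)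
  by_contra hcon
  push_neg at hcon
  set α := ⨅ y ∈ G, v y with hα
  have hxt : v x ≠ ⊤ := ne_top_of_lt hcon
  have hvneg : ∀ y : B, v (-y) = v y := by
    intro y
    have h1 : v (-1 : B) + v (-1 : B) = 0 := by
      rw [← AddValuation.map_mul, show ((-1 : B) * (-1) = 1) from by ring,
        AddValuation.map_one]
    have h2 : v (-1 : B) = 0 := (add_eq_zero.mp h1).1
    calc v (-y) = v ((-1) * y) := by rw [neg_one_mul]
      _ = v (-1 : B) + v y := AddValuation.map_mul _ _ _
      _ = v y := by rw [h2, zero_add]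
  have hpow : ∀ (j : ℕ) (y : B), y ∈ G ^ j → (j : ℕ∞) * α ≤ v y := by
    intro j
    induction j with
    | zero => intro y hy; simp
    | succ j ih =>
      intro y hy
      rw [pow_succ] at hy
      refine Submodule.mul_induction_on hy ?_ ?_
      · intro a ha b hb
        have h1 : (j : ℕ∞) * α ≤ v a := ih a ha
        have h2 : α ≤ v b := iInf₂_le b hb
        calc ((j + 1 : ℕ) : ℕ∞) * α = (j : ℕ∞) * α + α := by push_cast; ring
          _ ≤ v a + v b := add_le_add h1 h2
          _ = v (a * b) := (AddValuation.map_mul _ _ _).symm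
      · intro a b ha hb
        exact le_trans (le_min ha hb) (v.map_add _ _)
  have le_v_sum : ∀ (s : Finset ℕ) (fn : ℕ → B) (b : ℕ∞),
      (∀ i ∈ s, b ≤ v (fn i)) → b ≤ v (∑ i ∈ s, fn i) := by
    intro s fn b
    induction s using Finset.cons_induction with
    | empty => intro _; simp
    | cons a s ha ih =>
      intro hb
      rw [Finset.sum_cons]
      refine le_trans (le_min (hb a (Finset.mem_cons_self _ _))
        (ih fun i hi => hb i (Finset.mem_cons.mpr (Or.inr hi)))) (v.map_add _ _)
  obtain ⟨d, hd, c, hc, heq⟩ := hint x hx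
  obtain ⟨e, rfl⟩ : ∃ e, d = e + 1 := ⟨d - 1, by omega⟩
  have hxd : x ^ (e + 1) = -(∑ i ∈ Finset.range (e + 1), c (i + 1) * x ^ (e + 1 - (i + 1))) :=
    eq_neg_of_add_eq_zero_left heq
  have hterm : ∀ i ∈ Finset.range (e + 1),
      α + (e : ℕ∞) * v x ≤ v (c (i + 1) * x ^ (e + 1 - (i + 1))) := by
    intro i hi
    have hi' : i < e + 1 := Finset.mem_range.mp hi
    have hix : (i : ℕ∞) * v x ≤ (i : ℕ∞) * α := mul_le_mul_right hcon.le _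
    have harith : (e : ℕ∞) = (i : ℕ∞) + ((e + 1 - (i + 1) : ℕ) : ℕ∞) := by
      rw [← Nat.cast_add]
      congr 1
      omega
    calc α + (e : ℕ∞) * v x
        = α + ((i : ℕ∞) * v x + ((e + 1 - (i + 1) : ℕ) : ℕ∞) * v x) := by
          rw [harith, add_mul]
      _ ≤ α + ((i : ℕ∞) * α + ((e + 1 - (i + 1) : ℕ) : ℕ∞) * v x) :=
          add_le_add_right (add_le_add_left hix _) _
      _ = ((i + 1 : ℕ) : ℕ∞) * α + ((e + 1 - (i + 1) : ℕ) : ℕ∞) * v x := by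
          push_cast; ring
      _ ≤ v (c (i + 1)) + ((e + 1 - (i + 1) : ℕ) : ℕ∞) * v x :=
          add_le_add_left (hpow _ _ (hc (i + 1))) _
      _ = v (c (i + 1) * x ^ (e + 1 - (i + 1))) := by
          rw [AddValuation.map_mul, AddValuation.map_pow, nsmul_eq_mul]
  have hfin : α + (e : ℕ∞) * v x ≤ v (x ^ (e + 1)) := by
    rw [hxd, hvneg]
    exact le_v_sum _ _ _ hterm
  have hvx : v (x ^ (e + 1)) = ((e + 1 : ℕ) : ℕ∞) * v x := by
    rw [AddValuation.map_pow, nsmul_eq_mul]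
  have hne : (e : ℕ∞) * v x ≠ ⊤ :=
    WithTop.mul_ne_top (WithTop.natCast_ne_top _) hxt
  have hstrict : ((e + 1 : ℕ) : ℕ∞) * v x < α + (e : ℕ∞) * v x := by
    have h2 : ((e + 1 : ℕ) : ℕ∞) * v x = v x + (e : ℕ∞) * v x := by push_cast; ring
    rw [h2]
    exact WithTop.add_lt_add_right hne hcon
  exact absurd (lt_of_lt_of_le hstrict (hvx ▸ hfin)) (lt_irrefl _)


set_option maxHeartbeats 1000000 in
set_option synthInstance.maxHeartbeats 1000000 in
/-- Let `(A, m)` be a Noetherian local ring, `I` an `m`-primary ideal,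
`g₁,…,g_n ∈ I`, `h ∈ m` such that `(g₁,…,g_n,h)` is a joint reduction of `I^{[n]}, m`. In
`A' = A/(h)`, set `J' = (g₁,…,g_n)A'` and `I' = I·A'`. Then `J'` is a reduction of `I'`
(`J' ⊆ I' ⊆ J̄'`, equivalently `J'·I'^k = I'^{k+1}` for some `k`), and every rank-one
discrete valuation `v` on `A'` (nonnegative, i.e. with values in `ℕ∞`) satisfies
`v(J') = v(I')`. -/
theorem stmt_9 {A : Type*} [CommRing A] [IsLocalRing A] [IsNoetherianRing A]
    (I : Ideal A) (hI : I.radical = maximalIdeal A)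
    (n : ℕ) (hn : 0 < n) (g : Fin n → A) (hg : ∀ i, g i ∈ I)
    (h : A) (hh : h ∈ maximalIdeal A)
    (hjr : ∃ k : ℕ, 0 < k ∧
      (Ideal.span (Set.range g) * I ^ (n - 1) * maximalIdeal A +
          Ideal.span {h} * I ^ n) * (I ^ n * maximalIdeal A) ^ k =
        I ^ (n * (k + 1)) * (maximalIdeal A) ^ (k + 1)) :
    (Ideal.span (Set.range g)).map (Ideal.Quotient.mk (Ideal.span {h})) ≤
        I.map (Ideal.Quotient.mk (Ideal.span {h})) ∧
    (∃ k : ℕ,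
      (Ideal.span (Set.range g)).map (Ideal.Quotient.mk (Ideal.span {h})) *
          (I.map (Ideal.Quotient.mk (Ideal.span {h}))) ^ k =
        (I.map (Ideal.Quotient.mk (Ideal.span {h}))) ^ (k + 1)) ∧
    (∀ x ∈ I.map (Ideal.Quotient.mk (Ideal.span {h})),
      x ∈ intClosure ((Ideal.span (Set.range g)).map (Ideal.Quotient.mk (Ideal.span {h})))) ∧
    (∀ v : AddValuation (A ⧸ Ideal.span {h}) ℕ∞,
      (⨅ x ∈ (Ideal.span (Set.range g)).map (Ideal.Quotient.mk (Ideal.span {h})), v x) =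
        ⨅ x ∈ I.map (Ideal.Quotient.mk (Ideal.span {h})), v x) := by
  obtain ⟨k, hk0, heq⟩ := hjr
  obtain ⟨n', rfl⟩ : ∃ n', n = n' + 1 := ⟨n - 1, by omega⟩
  have hGI : Ideal.span (Set.range g) ≤ I :=
    Ideal.span_le.mpr (by rintro _ ⟨i, rfl⟩; exact hg i)
  set π := Ideal.Quotient.mk (Ideal.span {h}) with hπ
  set G' := (Ideal.span (Set.range g)).map π with hG'
  set I' := I.map π with hI'
  set m'' := (maximalIdeal A).map π with hm''
  have hG'I : G' ≤ I' := Ideal.map_mono hGI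
  have hIm : I' ≤ m'' := Ideal.map_mono (hI ▸ Ideal.le_radical)
  have hbot : Ideal.map π (Ideal.span {h}) = ⊥ := Ideal.map_quotient_self _
  have hmap := congrArg (Ideal.map π) heq
  simp only [Ideal.map_mul, Ideal.add_eq_sup, Ideal.map_sup, Ideal.map_pow,
    hbot, ← hπ, ← hG', ← hI', ← hm'', Nat.add_sub_cancel,
    Submodule.bot_mul, sup_bot_eq] at hmap
  have hKEq : G' * (I' ^ (n' + (n' + 1) * k) * m'' ^ (k + 1)) =
      I' * (I' ^ (n' + (n' + 1) * k) * m'' ^ (k + 1)) := by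
    have e1 : G' * I' ^ n' * m'' * (I' ^ (n' + 1) * m'') ^ k
        = G' * (I' ^ (n' + (n' + 1) * k) * m'' ^ (k + 1)) := by ring
    have e2 : I' ^ ((n' + 1) * (k + 1)) * m'' ^ (k + 1)
        = I' * (I' ^ (n' + (n' + 1) * k) * m'' ^ (k + 1)) := by ring
    rw [← e1, hmap, e2]
  set M := n' + (n' + 1) * k with hM
  have hpowK : ∀ p : ℕ, I' ^ p * (I' ^ M * m'' ^ (k + 1))
      = G' ^ p * (I' ^ M * m'' ^ (k + 1)) := by
    intro p
    induction p with
    | zero => simp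
    | succ p ih =>
      calc I' ^ (p + 1) * (I' ^ M * m'' ^ (k + 1))
          = I' ^ p * (I' * (I' ^ M * m'' ^ (k + 1))) := by ring
        _ = I' ^ p * (G' * (I' ^ M * m'' ^ (k + 1))) := by rw [← hKEq]
        _ = G' * (I' ^ p * (I' ^ M * m'' ^ (k + 1))) := by ring
        _ = G' * (G' ^ p * (I' ^ M * m'' ^ (k + 1))) := by rw [ih]
        _ = G' ^ (p + 1) * (I' ^ M * m'' ^ (k + 1)) := by ring
  have hstep : ∀ p : ℕ, I' ^ (p + (M + (k + 1))) ≤ G' ^ p := by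
    intro p
    calc I' ^ (p + (M + (k + 1))) = I' ^ p * (I' ^ M * I' ^ (k + 1)) := by ring
      _ ≤ I' ^ p * (I' ^ M * m'' ^ (k + 1)) :=
          Ideal.mul_mono_right (Ideal.mul_mono_right (Ideal.pow_right_mono hIm _))
      _ = G' ^ p * (I' ^ M * m'' ^ (k + 1)) := hpowK p
      _ ≤ G' ^ p := Ideal.mul_le_left
  obtain ⟨⟨N, hN⟩, hint⟩ := aux_key G' I' hG'I (M + (k + 1)) hstep
  exact ⟨hG'I, ⟨N, hN⟩, hint, fun v => aux_val G' I' hG'I hint v⟩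
end

section
/- Let k be a field, A = (A_1,…,A_n) indeterminates, and let G_1,…,G_n be nonzero elements of k[A][[X_1,…,X_n]]. Let 𝔞 ⊂ k[A][[X_1,…,X_n]] be the ideal generated by G_1,…,G_n and Δ ⊂ ℕ^n its diagram of initial exponents. For a ∈ k^n, let J'_a ⊂ k[[X_1,…,X_n]] be the ideal generated by the evaluations G_i(a,X) and Δ_a its diagram of initial exponents. Then: (1) for every a ∈ k^n, Δ ≤ Δ_a in the total order on translation-stable subsets of ℕ^n; (2) there exist Q_1,…,Q_l ∈ k[A] such that Γ = {a ∈ k^n : Q_1(a)⋯Q_l(a) = 0} is a proper algebraic subset of k^n and: (a) for every a ∈ W_2 = k^n − Γ, Δ = Δ_a; (b) if β^1,…,β^l denote the vertices of Δ, there exist R_i ∈ 𝔞 (1 ≤ i ≤ l) such that for every a ∈ W_2, ν(R_i(A,X)) = ν(R_i(a,X)) = β^i. -/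
noncomputable section

/-- The diagram of initial exponents `Δ_J = {ν(g) : g ∈ J, g ≠ 0}` of an ideal of the
power series ring. -/
def diagram {n : ℕ} {R : Type*} [CommRing R] (J : Ideal (MvPowerSeries (Fin n) R)) :
    Set (Fin n →₀ ℕ) :=
  {β | ∃ g ∈ J, hasInitExp g β}

/-- `β` is a vertex of a translation-stable subset `N` of `ℕ^n`. -/
def IsVertex {n : ℕ} (N : Set (Fin n →₀ ℕ)) (β : Fin n →₀ ℕ) : Prop :=
  β ∈ N ∧ ∀ α ∈ N, (∃ γ, β = α + γ) → α = β

/-- The total order on translation-stable subsets of `ℕ^n`, comparing the increasing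
sequences of vertices lexicographically (padded with `∞`): `N₁ ≤ N₂` iff they are equal or
`N₁` has a vertex `β` which is not a vertex of `N₂` while their vertices below `β`
coincide. -/
def diagramLE {n : ℕ} (N₁ N₂ : Set (Fin n →₀ ℕ)) : Prop :=
  N₁ = N₂ ∨ ∃ β, IsVertex N₁ β ∧ ¬IsVertex N₂ β ∧
    ∀ γ, degLt γ β → (IsVertex N₁ γ ↔ IsVertex N₂ γ)

namespace Stmt10

variable {n : ℕ}

instance piLexLO : LinearOrder (Lex (Fin n → ℕ)) := by
  have h : WellFoundedLT (Fin n) := inferInstance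
  exact @Pi.Lex.linearOrder (Fin n) (fun _ => ℕ) inferInstance h
    (fun _ => inferInstance)

def key (α : Fin n →₀ ℕ) : ℕ ×ₗ (Lex (Fin n → ℕ)) := toLex (∑ k, α k, toLex ⇑α)

theorem degLt_iff {α β : Fin n →₀ ℕ} : degLt α β ↔ key α < key β := by
  rw [key, key, Prod.Lex.lt_iff]
  exact Iff.rfl

theorem key_injective : Function.Injective (key (n := n)) := by
  intro α β h
  rw [key, key, toLex_inj, Prod.mk.injEq, toLex_inj] at h
  exact DFunLike.coe_injective h.2

theorem degLt_trichotomy (α β : Fin n →₀ ℕ) : degLt α β ∨ α = β ∨ degLt β α := by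
  rcases lt_trichotomy (key α) (key β) with h | h | h
  · exact Or.inl (degLt_iff.2 h)
  · exact Or.inr (Or.inl (key_injective h))
  · exact Or.inr (Or.inr (degLt_iff.2 h))

theorem degLt_trans {α β γ : Fin n →₀ ℕ} (h1 : degLt α β) (h2 : degLt β γ) : degLt α γ :=
  degLt_iff.2 ((degLt_iff.1 h1).trans (degLt_iff.1 h2))

theorem degLt_irrefl (α : Fin n →₀ ℕ) : ¬ degLt α α := fun h => lt_irrefl _ (degLt_iff.1 h)

theorem degLt_asymm {α β : Fin n →₀ ℕ} (h : degLt α β) : ¬ degLt β α :=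
  fun h' => degLt_irrefl α (degLt_trans h h')


theorem sum_le_of_not_degLt {α β : Fin n →₀ ℕ} (h : ¬ degLt α β) :
    (∑ k, β k) ≤ ∑ k, α k := by
  by_contra hlt
  exact h (Or.inl (lt_of_not_ge hlt))

theorem finite_sum_le (N : ℕ) : {γ : Fin n →₀ ℕ | (∑ k, γ k) ≤ N}.Finite := by
  have hfin : ({f : Fin n → ℕ | ∀ k, f k ≤ N}).Finite := by
    have : {f : Fin n → ℕ | ∀ k, f k ≤ N} = Set.pi Set.univ (fun _ => Set.Iic N) := by
      ext f; simp [Set.mem_pi, Set.mem_Iic, Pi.le_def]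
    rw [this]
    exact Set.Finite.pi (fun _ => Set.finite_Iic N)
  apply Set.Finite.subset (hfin.image (fun f => Finsupp.equivFunOnFinite.symm f))
  intro γ hγ
  refine ⟨⇑γ, fun k => ?_, ?_⟩
  · exact le_trans (Finset.single_le_sum (f := fun k => γ k) (fun _ _ => Nat.zero_le _)
      (Finset.mem_univ k)) hγ
  · exact Finsupp.equivFunOnFinite_symm_coe γ

theorem finite_not_degLt (β : Fin n →₀ ℕ) : {γ : Fin n →₀ ℕ | ¬ degLt β γ}.Finite :=
  Set.Finite.subset (finite_sum_le (∑ k, β k)) (fun _ h => sum_le_of_not_degLt h)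

theorem finite_degLt (β : Fin n →₀ ℕ) : {γ : Fin n →₀ ℕ | degLt γ β}.Finite :=
  Set.Finite.subset (finite_not_degLt β) (fun _ h => degLt_asymm h)

theorem exists_degLt_min (S : Set (Fin n →₀ ℕ)) (hne : S.Nonempty) :
    ∃ β ∈ S, ∀ γ ∈ S, ¬ degLt γ β := by
  obtain ⟨γ0, hγ0⟩ := hne
  have hT : (S ∩ {γ | ¬ degLt γ0 γ}).Finite :=
    Set.Finite.subset (finite_not_degLt γ0) (fun _ h => h.2)
  have hTne : (hT.toFinset).Nonempty := by
    refine ⟨γ0, ?_⟩; rw [Set.Finite.mem_toFinset]; exact ⟨hγ0, degLt_irrefl γ0⟩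
  obtain ⟨β, hβ, hmin⟩ := Finset.exists_min_image hT.toFinset key hTne
  rw [Set.Finite.mem_toFinset] at hβ
  refine ⟨β, hβ.1, fun γ hγ h => ?_⟩
  have hkey : key γ < key β := degLt_iff.1 h
  have hβ0 : key β ≤ key γ0 := not_lt.1 (fun hc => hβ.2 (degLt_iff.2 hc))
  have hγT : γ ∈ hT.toFinset := by
    rw [Set.Finite.mem_toFinset]
    exact ⟨hγ, fun h0 => absurd (degLt_iff.1 h0) (not_lt.2 (hkey.trans_le hβ0).le)⟩
  exact absurd (hmin γ hγT) (not_le.2 hkey)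

theorem exists_degLt_max {S : Set (Fin n →₀ ℕ)} (hS : S.Finite) (hne : S.Nonempty) :
    ∃ β ∈ S, ∀ γ ∈ S, ¬ degLt β γ := by
  have hTne : (hS.toFinset).Nonempty := by
    obtain ⟨x, hx⟩ := hne; exact ⟨x, hS.mem_toFinset.2 hx⟩
  obtain ⟨β, hβ, hmax⟩ := Finset.exists_max_image hS.toFinset key hTne
  rw [Set.Finite.mem_toFinset] at hβ
  refine ⟨β, hβ, fun γ hγ h => ?_⟩
  exact absurd (hmax γ (hS.mem_toFinset.2 hγ)) (not_le.2 (degLt_iff.1 h))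

theorem degLt_add_right {α β : Fin n →₀ ℕ} (γ : Fin n →₀ ℕ) (h : degLt α β) :
    degLt (α + γ) (β + γ) := by
  have hsum : ∀ δ : Fin n →₀ ℕ, (∑ k, (δ + γ) k) = (∑ k, δ k) + ∑ k, γ k := by
    intro δ; simp [Finsupp.add_apply, Finset.sum_add_distrib]
  rcases h with h | ⟨h1, j, hj, hjlt⟩
  · exact Or.inl (by rw [hsum, hsum]; omega)
  · refine Or.inr ⟨by rw [hsum, hsum, h1], j, fun kk hk => ?_, ?_⟩
    · simp [Finsupp.add_apply, hj kk hk]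
    · simp only [Finsupp.add_apply]; omega

theorem degLt_add_iff {α β γ : Fin n →₀ ℕ} : degLt (α + γ) (β + γ) ↔ degLt α β := by
  constructor
  · intro h
    rcases degLt_trichotomy α β with h' | rfl | h'
    · exact h'
    · exact absurd h (degLt_irrefl _)
    · exact absurd h (degLt_asymm (degLt_add_right γ h'))
  · exact degLt_add_right γ

theorem degLt_of_eq_add {α β γ : Fin n →₀ ℕ} (h : β = α + γ) (hγ : γ ≠ 0) : degLt α β := by
  left
  have : (∑ k, β k) = (∑ k, α k) + ∑ k, γ k := by
    subst h; simp [Finsupp.add_apply, Finset.sum_add_distrib]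
  have hpos : 0 < ∑ k, γ k := by
    rcases Nat.eq_zero_or_pos (∑ k, γ k) with h0 | h0
    · exfalso
      apply hγ
      ext kk
      have := (Finset.sum_eq_zero_iff (s := Finset.univ) (f := fun k => γ k)).1 h0
      simpa using this kk (Finset.mem_univ kk)
    · exact h0
  omega

theorem degLt_wf : WellFounded (degLt (n := n)) := by
  have hsub : Subrelation (degLt (n := n))
      (InvImage (· < ·) (fun β => (finite_degLt β).toFinset.card)) := by
    intro α β h
    apply Finset.card_lt_card
    rw [Finset.ssubset_iff_of_subset]
    · exact ⟨α, by rw [Set.Finite.mem_toFinset]; exact h,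
        by rw [Set.Finite.mem_toFinset]; exact degLt_irrefl α⟩
    · intro x hx
      rw [Set.Finite.mem_toFinset] at hx ⊢
      exact degLt_trans hx h
  exact Subrelation.wf hsub (InvImage.wf _ Nat.lt_wfRel.wf)


/-! ### Initial exponents -/

section InitExp

variable {R : Type*} [Semiring R]


theorem hasInitExp_unique {f : MvPowerSeries (Fin n) R} {β β' : Fin n →₀ ℕ}
    (h : hasInitExp f β) (h' : hasInitExp f β') : β = β' := by
  rcases degLt_trichotomy β β' with hlt | he | hlt
  · exact absurd (h'.2 β hlt) h.1
  · exact he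
  · exact absurd (h.2 β' hlt) h'.1

theorem exists_hasInitExp {f : MvPowerSeries (Fin n) R} (hf : f ≠ 0) :
    ∃ β, hasInitExp f β := by
  have hne : {γ : Fin n →₀ ℕ | MvPowerSeries.coeff γ f ≠ 0}.Nonempty := by
    by_contra h
    rw [Set.not_nonempty_iff_eq_empty] at h
    apply hf
    ext γ
    by_contra hc
    have : γ ∈ {γ : Fin n →₀ ℕ | MvPowerSeries.coeff γ f ≠ 0} := by
      simpa using hc
    rw [h] at this
    exact Set.notMem_empty γ this
  obtain ⟨β, hβ, hmin⟩ := exists_degLt_min _ hne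
  refine ⟨β, hβ, fun γ hγ => ?_⟩
  by_contra hc
  exact hmin γ hc hγ

theorem not_degLt_initExp_map {S : Type*} [Semiring S] {g : R →+* S}
    {F : MvPowerSeries (Fin n) R} {β δ : Fin n →₀ ℕ}
    (hF : hasInitExp F β) (hmap : hasInitExp (MvPowerSeries.map (σ := Fin n) g F) δ) :
    ¬ degLt δ β := by
  intro h
  apply hmap.1
  rw [MvPowerSeries.coeff_map, hF.2 δ h, map_zero]

theorem hasInitExp_map {S : Type*} [Semiring S] {g : R →+* S}
    {F : MvPowerSeries (Fin n) R} {β : Fin n →₀ ℕ}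
    (hF : hasInitExp F β) (hne : g (MvPowerSeries.coeff β F) ≠ 0) :
    hasInitExp (MvPowerSeries.map (σ := Fin n) g F) β := by
  refine ⟨by rw [MvPowerSeries.coeff_map]; exact hne, fun γ hγ => ?_⟩
  rw [MvPowerSeries.coeff_map, hF.2 γ hγ, map_zero]

end InitExp

section CRing

variable {R : Type*} [CommRing R]

theorem hasInitExp_C_mul [NoZeroDivisors R] {f : MvPowerSeries (Fin n) R} {β : Fin n →₀ ℕ}
    {c : R} (hc : c ≠ 0) (h : hasInitExp f β) :
    hasInitExp (MvPowerSeries.C (σ := Fin n) c * f) β := by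
  constructor
  · rw [MvPowerSeries.coeff_C_mul]
    exact mul_ne_zero hc h.1
  · intro γ hγ
    rw [MvPowerSeries.coeff_C_mul, h.2 γ hγ, mul_zero]

theorem coeff_monomial_mul_of_degLt {H : MvPowerSeries (Fin n) R} {β : Fin n →₀ ℕ}
    (hH : ∀ η, degLt η β → MvPowerSeries.coeff η H = 0) (e : R) {γ δ : Fin n →₀ ℕ}
    (hδ : degLt δ (β + γ)) :
    MvPowerSeries.coeff δ (MvPowerSeries.monomial γ e * H) = 0 := by
  rw [MvPowerSeries.coeff_monomial_mul]
  split_ifs with hle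
  · have hrep : (δ - γ) + γ = δ := tsub_add_cancel_of_le hle
    have : degLt ((δ - γ) + γ) (β + γ) := by rw [hrep]; exact hδ
    rw [hH (δ - γ) (degLt_add_iff.1 this), mul_zero]
  · rfl

theorem hasInitExp_monomial_mul {H : MvPowerSeries (Fin n) R} {β : Fin n →₀ ℕ}
    (hH : hasInitExp H β) (γ : Fin n →₀ ℕ) :
    hasInitExp (MvPowerSeries.monomial γ (1 : R) * H) (β + γ) := by
  constructor
  · rw [MvPowerSeries.coeff_monomial_mul, if_pos le_add_self, add_tsub_cancel_right, one_mul]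
    exact hH.1
  · exact fun δ hδ => coeff_monomial_mul_of_degLt hH.2 1 hδ

end CRing


/-! ### Diagrams and vertices -/

section Diagram

variable {R : Type*} [CommRing R] {J : Ideal (MvPowerSeries (Fin n) R)}

theorem diagram_stable {δ : Fin n →₀ ℕ} (h : δ ∈ diagram J) (γ : Fin n →₀ ℕ) :
    δ + γ ∈ diagram J := by
  obtain ⟨g, hg, hinit⟩ := h
  exact ⟨MvPowerSeries.monomial γ (1 : R) * g, J.mul_mem_left _ hg, hasInitExp_monomial_mul hinit γ⟩

theorem exists_vertex_le {N : Set (Fin n →₀ ℕ)} {α : Fin n →₀ ℕ} (hα : α ∈ N) :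
    ∃ v γ, IsVertex N v ∧ α = v + γ := by
  have hne : {x ∈ N | ∃ γ, α = x + γ}.Nonempty := ⟨α, hα, 0, (add_zero α).symm⟩
  obtain ⟨v, ⟨hvN, γ, hγ⟩, hmin⟩ := exists_degLt_min _ hne
  refine ⟨v, γ, ⟨hvN, fun x hx ⟨γ', hγ'⟩ => ?_⟩, hγ⟩
  by_contra hne'
  have hγ'0 : γ' ≠ 0 := fun h0 => hne' (by rw [h0, add_zero] at hγ'; exact hγ'.symm)
  exact hmin x ⟨hx, γ' + γ, by rw [hγ, hγ', add_assoc]⟩ (degLt_of_eq_add hγ' hγ'0)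

theorem mem_of_vertices_subset {N M : Set (Fin n →₀ ℕ)}
    (hM : ∀ δ ∈ M, ∀ γ : Fin n →₀ ℕ, δ + γ ∈ M)
    (hV : ∀ v, IsVertex N v → v ∈ M) {α : Fin n →₀ ℕ} (hα : α ∈ N) : α ∈ M := by
  obtain ⟨v, γ, hv, rfl⟩ := exists_vertex_le hα
  exact hM v (hV v hv) γ

theorem finite_vertices (N : Set (Fin n →₀ ℕ)) : {β | IsVertex N β}.Finite := by
  have hanti : IsAntichain (· ≤ ·) {β | IsVertex N β} := by
    intro a ha b hb hne hle
    obtain ⟨c, hc⟩ := le_iff_exists_add.1 hle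
    exact hne (hb.2 a ha.1 ⟨c, hc⟩)
  exact hanti.finite_of_partiallyWellOrderedOn (Set.isPWO_of_wellQuasiOrderedLE _)

end Diagram


/-! ### Evaluation and lifting -/

section Field

variable {k : Type*} [Field k]

def ev (a : Fin n → k) :
    MvPowerSeries (Fin n) (MvPolynomial (Fin n) k) →+* MvPowerSeries (Fin n) k :=
  MvPowerSeries.map (σ := Fin n) (MvPolynomial.eval a)

def lft : MvPowerSeries (Fin n) k →+* MvPowerSeries (Fin n) (MvPolynomial (Fin n) k) :=
  MvPowerSeries.map (σ := Fin n) (MvPolynomial.C)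

theorem ev_lft (a : Fin n → k) (f : MvPowerSeries (Fin n) k) : ev a (lft f) = f := by
  have hcomp : (MvPolynomial.eval a).comp (MvPolynomial.C (σ := Fin n)) = RingHom.id k := by
    ext x; simp
  show (MvPowerSeries.map (σ := Fin n) (MvPolynomial.eval a))
    ((MvPowerSeries.map (σ := Fin n) (MvPolynomial.C)) f) = f
  rw [← RingHom.comp_apply, ← MvPowerSeries.map_comp, hcomp, MvPowerSeries.map_id,
    RingHom.id_apply]

theorem coeff_ev (a : Fin n → k) (F : MvPowerSeries (Fin n) (MvPolynomial (Fin n) k))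
    (γ : Fin n →₀ ℕ) :
    MvPowerSeries.coeff γ (ev a F) = MvPolynomial.eval a (MvPowerSeries.coeff γ F) :=
  rfl

theorem ev_mem_span (a : Fin n → k) {G : Fin n → MvPowerSeries (Fin n) (MvPolynomial (Fin n) k)}
    {F} (hF : F ∈ Ideal.span (Set.range G)) :
    ev a F ∈ Ideal.span (Set.range fun i => ev a (G i)) := by
  have h := Ideal.mem_map_of_mem (ev a) hF
  rw [Ideal.map_span] at h
  have heq : (ev a) '' Set.range G = Set.range fun i => ev a (G i) := by
    rw [← Set.range_comp]; rfl
  rwa [heq] at h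

theorem main_lift (G : Fin n → MvPowerSeries (Fin n) (MvPolynomial (Fin n) k)) (a : Fin n → k)
    (δ : Fin n →₀ ℕ) :
    (∀ v, IsVertex (diagram (Ideal.span (Set.range G))) v → degLt v δ →
        v ∈ diagram (Ideal.span (Set.range fun i => ev a (G i)))) →
    ∀ f : MvPowerSeries (Fin n) k,
      f ∈ Ideal.span (Set.range fun i => ev a (G i)) → hasInitExp f δ →
    ∃ F c, F ∈ Ideal.span (Set.range G) ∧ c ≠ 0 ∧
      ev a F = MvPowerSeries.C (σ := Fin n) c * f ∧ hasInitExp F δ := by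
  induction δ using degLt_wf.induction with
  | _ δ IH =>
  intro hδ f hf hfδ
  classical
  have hfne : f ≠ 0 := fun h0 => hfδ.1 (by rw [h0, map_zero])
  -- the set of achievable initial exponents of lifts of (scalar multiples of) f
  set S : Set (Fin n →₀ ℕ) := {γ | ∃ F c, F ∈ Ideal.span (Set.range G) ∧ c ≠ 0 ∧
      ev a F = MvPowerSeries.C (σ := Fin n) c * f ∧ hasInitExp F γ} with hSdef
  -- S is nonempty
  obtain ⟨cf, hsum⟩ := Ideal.mem_span_range_iff_exists_fun.1 hf
  have hF0mem : (∑ i, lft (cf i) * G i) ∈ Ideal.span (Set.range G) :=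
    Ideal.sum_mem _ (fun i _ => Ideal.mul_mem_left _ _ (Ideal.subset_span ⟨i, rfl⟩))
  have hevF0 : ev a (∑ i, lft (cf i) * G i) = f := by
    rw [map_sum, ← hsum]
    exact Finset.sum_congr rfl fun i _ => by rw [map_mul, ev_lft]
  have hF0ne : (∑ i, lft (cf i) * G i) ≠ 0 := fun h0 => hfne (by rw [← hevF0, h0, map_zero])
  obtain ⟨γ0, hγ0⟩ := exists_hasInitExp hF0ne
  have hγ0S : γ0 ∈ S := ⟨_, 1, hF0mem, one_ne_zero,
    by rw [hevF0, map_one, one_mul], hγ0⟩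
  -- S is bounded by δ
  have hSbd : S ⊆ {γ | ¬ degLt δ γ} := by
    rintro γ ⟨F, c, hFmem, hc, hev, hFγ⟩
    have hCf : hasInitExp (MvPowerSeries.C (σ := Fin n) c * f) δ := hasInitExp_C_mul hc hfδ
    have h2 : hasInitExp (ev a F) δ := hev ▸ hCf
    exact not_degLt_initExp_map hFγ h2
  -- take a maximal achievable exponent
  obtain ⟨γm, hγmS, hγmax⟩ := exists_degLt_max ((finite_not_degLt δ).subset hSbd) ⟨γ0, hγ0S⟩
  obtain ⟨F, c, hFmem, hc, hev, hFγ⟩ := hγmS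
  have hnotlt : ¬ degLt δ γm := hSbd ⟨F, c, hFmem, hc, hev, hFγ⟩
  rcases degLt_trichotomy γm δ with hlt | heq | hgt
  rotate_left
  · exact heq ▸ ⟨F, c, hFmem, hc, hev, hFγ⟩
  · exact absurd hgt hnotlt
  -- the case `ν(F) < δ`: contradiction with maximality
  exfalso
  have hγmΔ : γm ∈ diagram (Ideal.span (Set.range G)) := ⟨F, hFmem, hFγ⟩
  obtain ⟨v, γ', hv, hrep⟩ := exists_vertex_le hγmΔ
  have hvγm : ¬ degLt γm v := by
    rcases eq_or_ne γ' 0 with rfl | hne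
    · rw [add_zero] at hrep; rw [hrep]; exact degLt_irrefl v
    · exact degLt_asymm (degLt_of_eq_add hrep hne)
  have hvδ : degLt v δ := by
    rcases eq_or_ne γ' 0 with rfl | hne
    · rw [add_zero] at hrep; rw [← hrep]; exact hlt
    · exact degLt_trans (degLt_of_eq_add hrep hne) hlt
  obtain ⟨fβ, hfβmem, hfβ⟩ := hδ v hv hvδ
  obtain ⟨H, c', hHmem, hc', hevH, hHv⟩ :=
    IH v hvδ (fun w hw hwv => hδ w hw (degLt_trans hwv hvδ)) fβ hfβmem hfβ
  set d := MvPowerSeries.coeff v H with hd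
  set e := MvPowerSeries.coeff γm F with he
  set F' := MvPowerSeries.C (σ := Fin n) d * F -
      MvPowerSeries.monomial γ' e * H with hF'def
  have hF'mem : F' ∈ Ideal.span (Set.range G) :=
    Ideal.sub_mem _ (Ideal.mul_mem_left _ _ hFmem) (Ideal.mul_mem_left _ _ hHmem)
  -- low coefficients of F' vanish
  have hγ'le : γ' ≤ γm := by rw [hrep]; exact le_add_self
  have hsub : γm - γ' = v := by rw [hrep, add_tsub_cancel_right]
  have hF'low : ∀ γ, (degLt γ γm ∨ γ = γm) → MvPowerSeries.coeff γ F' = 0 := by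
    rintro γ (hγ | rfl)
    · rw [hF'def, map_sub, MvPowerSeries.coeff_C_mul, hFγ.2 γ hγ,
        coeff_monomial_mul_of_degLt hHv.2 e (by rw [← hrep]; exact hγ), mul_zero, sub_zero]
    · rw [hF'def, map_sub, MvPowerSeries.coeff_C_mul, MvPowerSeries.coeff_monomial_mul,
        if_pos hγ'le, hsub, ← hd, ← he, mul_comm, sub_self]
  -- evaluation of the leading coefficients
  have heve : MvPolynomial.eval a e = 0 := by
    have h1 : MvPolynomial.eval a e = MvPowerSeries.coeff γm (ev a F) := (coeff_ev a F γm).symm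
    rw [h1, hev, MvPowerSeries.coeff_C_mul, hfδ.2 γm hlt, mul_zero]
  have hevd : MvPolynomial.eval a d ≠ 0 := by
    have h1 : MvPolynomial.eval a d = MvPowerSeries.coeff v (ev a H) := (coeff_ev a H v).symm
    rw [h1, hevH, MvPowerSeries.coeff_C_mul]
    exact mul_ne_zero hc' hfβ.1
  -- evaluation of F'
  have hevF' : ev a F' = MvPowerSeries.C (σ := Fin n) (MvPolynomial.eval a d * c) * f := by
    rw [hF'def, map_sub, map_mul, map_mul]
    show MvPowerSeries.map (σ := Fin n) (MvPolynomial.eval a) (MvPowerSeries.C (σ := Fin n) d) * ev a F -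
      MvPowerSeries.map (σ := Fin n) (MvPolynomial.eval a)
        (MvPowerSeries.monomial γ' e) * ev a H = _
    rw [MvPowerSeries.map_C, MvPowerSeries.map_monomial, heve, hev]
    rw [show (MvPowerSeries.monomial γ') (0 : k) = 0 from map_zero _]
    rw [zero_mul, sub_zero, ← mul_assoc, ← map_mul]
  have hF'ne : F' ≠ 0 := by
    intro h0
    have : MvPowerSeries.coeff δ (ev a F') ≠ 0 := by
      rw [hevF', MvPowerSeries.coeff_C_mul]
      exact mul_ne_zero (mul_ne_zero hevd hc) hfδ.1
    rw [h0, map_zero, map_zero] at this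
    exact this rfl
  obtain ⟨ρ, hρ⟩ := exists_hasInitExp hF'ne
  have hρS : ρ ∈ S := ⟨F', _, hF'mem, mul_ne_zero hevd hc, hevF', hρ⟩
  have hγmρ : degLt γm ρ := by
    rcases degLt_trichotomy γm ρ with h | h | h
    · exact h
    · exact absurd hρ.1 (by rw [← h]; intro hne; exact hne (hF'low γm (Or.inr rfl)))
    · exact absurd hρ.1 (fun hne => hne (hF'low ρ (Or.inl h)))
  exact hγmax ρ hρS hγmρ

end Field


end Stmt10

/-- Lemma 4.1, after Bierstone–Milman. Let `G₁,…,G_n` be nonzero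
elements of `k[A][[X₁,…,X_n]]`, `𝔞` the ideal they generate with diagram `Δ`, and for
`a ∈ k^n` let `Δ_a` be the diagram of the ideal generated by the evaluations `Gᵢ(a,X)`.
Then (1) `Δ ≤ Δ_a` for all `a`; (2) there are nonzero `Q₁,…,Q_l ∈ k[A]` whose common
nonvanishing locus `W₂ = k^n − Γ` (with `Γ` a proper algebraic subset) satisfies:
(a) `Δ = Δ_a` for `a ∈ W₂`; (b) if `β¹,…,β^l` are the vertices of `Δ`, there are
`Rᵢ ∈ 𝔞` with `ν(Rᵢ(A,X)) = ν(Rᵢ(a,X)) = βⁱ` for all `a ∈ W₂`. -/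
theorem stmt_10 (k : Type*) [Field k] [CharZero k] (n : ℕ)
    (G : Fin n → MvPowerSeries (Fin n) (MvPolynomial (Fin n) k))
    (hG : ∀ i, G i ≠ 0) :
    (∀ a : Fin n → k,
      diagramLE (diagram (Ideal.span (Set.range G)))
        (diagram (Ideal.span (Set.range fun i =>
          MvPowerSeries.map (σ := Fin n) (MvPolynomial.eval a) (G i))))) ∧
    ∃ (l : ℕ) (Q : Fin l → MvPolynomial (Fin n) k) (β : Fin l → (Fin n →₀ ℕ))
      (R : Fin l → MvPowerSeries (Fin n) (MvPolynomial (Fin n) k)),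
      (∀ i, Q i ≠ 0) ∧
      {a : Fin n → k | ∃ i, MvPolynomial.eval a (Q i) = 0} ≠ Set.univ ∧
      (∀ γ, IsVertex (diagram (Ideal.span (Set.range G))) γ ↔ γ ∈ Set.range β) ∧
      (∀ i, R i ∈ Ideal.span (Set.range G)) ∧
      ∀ a : Fin n → k, (∀ i, MvPolynomial.eval a (Q i) ≠ 0) →
        diagram (Ideal.span (Set.range G)) =
          diagram (Ideal.span (Set.range fun i =>
            MvPowerSeries.map (σ := Fin n) (MvPolynomial.eval a) (G i))) ∧
        ∀ i, hasInitExp (R i) (β i) ∧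
          hasInitExp (MvPowerSeries.map (σ := Fin n) (MvPolynomial.eval a) (R i)) (β i) := by

  classical
  haveI : Infinite k := Infinite.of_injective (Nat.cast : ℕ → k) Nat.cast_injective
  set Δ : Set (Fin n →₀ ℕ) := diagram (Ideal.span (Set.range G)) with hΔdef
  -- the diagram of the evaluated ideal, as a function of `a`
  have hΔa : ∀ a : Fin n → k,
      diagram (Ideal.span (Set.range fun i =>
        MvPowerSeries.map (σ := Fin n) (MvPolynomial.eval a) (G i))) =
      diagram (Ideal.span (Set.range fun i => Stmt10.ev a (G i))) := fun a => rfl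
  constructor
  · -- Part (1): `Δ ≤ Δ_a` for every `a`
    intro a
    set Δa : Set (Fin n →₀ ℕ) := diagram (Ideal.span (Set.range fun i => Stmt10.ev a (G i))) with hΔa2
    rw [hΔa a]
    by_cases hEq : Δ = Δa
    · exact Or.inl hEq
    right
    set D : Set (Fin n →₀ ℕ) :=
      ({γ | IsVertex Δ γ} \ {γ | IsVertex Δa γ}) ∪ ({γ | IsVertex Δa γ} \ {γ | IsVertex Δ γ})
      with hDdef
    have hDne : D.Nonempty := by
      by_contra hD
      rw [Set.not_nonempty_iff_eq_empty] at hD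
      have hViff : ∀ γ, IsVertex Δ γ ↔ IsVertex Δa γ := by
        intro γ
        constructor
        · intro h
          by_contra h2
          have : γ ∈ D := Or.inl ⟨h, h2⟩
          rw [hD] at this; exact this
        · intro h
          by_contra h2
          have : γ ∈ D := Or.inr ⟨h, h2⟩
          rw [hD] at this; exact this
      apply hEq
      apply Set.Subset.antisymm
      · exact fun α hα => Stmt10.mem_of_vertices_subset (fun δ hδ γ => Stmt10.diagram_stable hδ γ)
          (fun v hv => ((hViff v).1 hv).1) hα
      · exact fun α hα => Stmt10.mem_of_vertices_subset (fun δ hδ γ => Stmt10.diagram_stable hδ γ)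
          (fun v hv => ((hViff v).2 hv).1) hα
    obtain ⟨β0, hβ0D, hβ0min⟩ := Stmt10.exists_degLt_min D hDne
    have hagree : ∀ γ, degLt γ β0 → (IsVertex Δ γ ↔ IsVertex Δa γ) := by
      intro γ hγ
      constructor
      · intro h
        by_contra h2
        exact hβ0min γ (Or.inl ⟨h, h2⟩) hγ
      · intro h
        by_contra h2
        exact hβ0min γ (Or.inr ⟨h, h2⟩) hγ
    rcases hβ0D with h | h
    · exact ⟨β0, h.1, h.2, hagree⟩
    · -- impossible: `β0` is a vertex of `Δ_a` but not of `Δ`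
      exfalso
      obtain ⟨f, hf, hfβ0⟩ := h.1.1
      obtain ⟨F, c, hFmem, -, -, hFβ0⟩ := Stmt10.main_lift G a β0
        (fun v hv hlt => ((hagree v hlt).1 hv).1) f hf hfβ0
      have hβ0Δ : β0 ∈ Δ := ⟨F, hFmem, hFβ0⟩
      obtain ⟨v, γ, hvvert, hrep⟩ := Stmt10.exists_vertex_le hβ0Δ
      have hγne : γ ≠ 0 := by
        intro h0
        rw [h0, add_zero] at hrep
        exact h.2 (hrep ▸ hvvert)
      have hvlt : degLt v β0 := Stmt10.degLt_of_eq_add hrep hγne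
      have hvVa : IsVertex Δa v := (hagree v hvlt).1 hvvert
      have := h.1.2 v hvVa.1 ⟨γ, hrep⟩
      exact Stmt10.degLt_irrefl β0 (this ▸ hvlt)
  · -- Part (2)
    have hVfin := Stmt10.finite_vertices Δ
    set l := hVfin.toFinset.card with hldef
    set eF := hVfin.toFinset.equivFin with heF
    set β : Fin l → (Fin n →₀ ℕ) := fun i => (eF.symm i : Fin n →₀ ℕ) with hβdef
    have hrange : ∀ γ, IsVertex Δ γ ↔ γ ∈ Set.range β := by
      intro γ
      constructor
      · intro h
        have hγmem : γ ∈ hVfin.toFinset := hVfin.mem_toFinset.2 h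
        refine ⟨eF ⟨γ, hγmem⟩, ?_⟩
        rw [hβdef]
        simp
      · rintro ⟨i, rfl⟩
        have := (eF.symm i).2
        rw [Set.Finite.mem_toFinset] at this
        exact this
    have hβvert : ∀ i, IsVertex Δ (β i) := fun i => (hrange (β i)).2 ⟨i, rfl⟩
    have hβΔ : ∀ i : Fin l, ∃ g, g ∈ Ideal.span (Set.range G) ∧ hasInitExp g (β i) := by
      intro i
      obtain ⟨g, hg, hinit⟩ := (hβvert i).1
      exact ⟨g, hg, hinit⟩
    choose R hRmem hRinit using hβΔ
    set Q : Fin l → MvPolynomial (Fin n) k :=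
      fun i => MvPowerSeries.coeff (β i) (R i) with hQdef
    have hQne : ∀ i, Q i ≠ 0 := fun i => (hRinit i).1
    refine ⟨l, Q, β, R, hQne, ?_, hrange, hRmem, ?_⟩
    · -- the bad set is not everything
      have hprod : (∏ i, Q i) ≠ 0 := Finset.prod_ne_zero_iff.2 fun i _ => hQne i
      have hex : ∃ a : Fin n → k, MvPolynomial.eval a (∏ i, Q i) ≠ 0 := by
        by_contra hcon
        push_neg at hcon
        exact hprod (MvPolynomial.funext fun x => by rw [hcon x, map_zero])
      obtain ⟨a, ha⟩ := hex
      rw [Set.ne_univ_iff_exists_notMem]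
      refine ⟨a, fun hmem => ?_⟩
      obtain ⟨i, hi⟩ := hmem
      apply ha
      rw [map_prod]
      exact Finset.prod_eq_zero (Finset.mem_univ i) hi
    · -- properties on the good set
      intro a hQa
      set Δa : Set (Fin n →₀ ℕ) := diagram (Ideal.span (Set.range fun i => Stmt10.ev a (G i)))
        with hΔa2
      have hRa : ∀ i, hasInitExp (Stmt10.ev a (R i)) (β i) :=
        fun i => Stmt10.hasInitExp_map (hRinit i) (hQa i)
      have hvertΔa : ∀ v, IsVertex Δ v → v ∈ Δa := by
        intro v hv
        obtain ⟨i, rfl⟩ := (hrange v).1 hv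
        exact ⟨Stmt10.ev a (R i), Stmt10.ev_mem_span a (hRmem i), hRa i⟩
      constructor
      · rw [hΔa a]
        apply Set.Subset.antisymm
        · exact fun α hα => Stmt10.mem_of_vertices_subset (fun δ hδ γ => Stmt10.diagram_stable hδ γ)
            hvertΔa hα
        · rintro α ⟨f, hf, hinit⟩
          obtain ⟨F, c, hFmem, -, -, hFα⟩ := Stmt10.main_lift G a α
            (fun v hv _ => hvertΔa v hv) f hf hinit
          exact ⟨F, hFmem, hFα⟩
      · exact fun i => ⟨hRinit i, hRa i⟩

end
end
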